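/- Let K₁ and K₂ be isotropic subspaces of (E, B) with dim K₁ = dim K₂ and K₁ ∩ K₂^⊥ ⊆ K₂, and let q₁ : K₁^⊥ → K₁^⊥/K₁ be the quotient map. Then there exists a linear map s₀ : K₁^⊥/K₁ → K₁^⊥ with q₁ ∘ s₀ = id and range(s₀) ⊆ K₂^⊥; moreover, for any two such maps s₀ and s₀', the range of s₀ − s₀' is contained in K₁ ∩ K₂. -/

import Mathlib

/-- The orthogonal complement `K^⊥` of a subspace `K` with respect to `B`. -/
noncomputable def orthB {E : Type*} [AddCommGroup E] [Module ℝ E]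
    (B : LinearMap.BilinForm ℝ E) (K : Submodule ℝ E) : Submodule ℝ E :=
  LinearMap.BilinForm.orthogonal B K
/-- An isotropic `K`, regarded as a submodule of `K^⊥`. -/
noncomputable def Ksub {E : Type*} [AddCommGroup E] [Module ℝ E]
    (B : LinearMap.BilinForm ℝ E) (K : Submodule ℝ E) : Submodule ℝ ↥(orthB B K) :=
  Submodule.comap (orthB B K).subtype K

/-- The reduced space `K^⊥/K`. -/
abbrev Red {E : Type*} [AddCommGroup E] [Module ℝ E]
    (B : LinearMap.BilinForm ℝ E) (K : Submodule ℝ E) :=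
  ↥(orthB B K) ⧸ Ksub B K

/-- The quotient map `q : K^⊥ → K^⊥/K`. -/
noncomputable def qmap {E : Type*} [AddCommGroup E] [Module ℝ E]
    (B : LinearMap.BilinForm ℝ E) (K : Submodule ℝ E) :
    ↥(orthB B K) →ₗ[ℝ] Red B K :=
  (Ksub B K).mkQ

private lemma orth_sup {E : Type*} [AddCommGroup E] [Module ℝ E]
    (B : LinearMap.BilinForm ℝ E) (K L : Submodule ℝ E) :
    orthB B (K ⊔ L) = orthB B K ⊓ orthB B L := by
  refine le_antisymm (le_inf (LinearMap.BilinForm.orthogonal_le le_sup_left)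
    (LinearMap.BilinForm.orthogonal_le le_sup_right)) ?_
  rintro x ⟨hx1, hx2⟩ n hn
  obtain ⟨a, ha, b, hb, rfl⟩ := Submodule.mem_sup.mp hn
  have h1 : B a x = 0 := hx1 a ha
  have h2 : B b x = 0 := hx2 b hb
  show B (a + b) x = 0
  rw [map_add, LinearMap.add_apply, h1, h2, add_zero]

/-- If `K₁ ∩ K₂^⊥ ⊆ K₂` for isotropic `K₁, K₂` of equal dimension, there is a splitting
`s₀ : K₁^⊥/K₁ → K₁^⊥` with image in `K₂^⊥`, unique up to elements of `K₁ ∩ K₂`. -/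
theorem stmt17 (E : Type*) [AddCommGroup E] [Module ℝ E] [FiniteDimensional ℝ E]
    (B : LinearMap.BilinForm ℝ E)
    (hBsymm : ∀ e e', B e e' = B e' e)
    (hBnd : LinearMap.BilinForm.Nondegenerate B)
    (K₁ K₂ : Submodule ℝ E)
    (hK₁ : K₁ ≤ orthB B K₁) (hK₂ : K₂ ≤ orthB B K₂)
    (hdim : Module.finrank ℝ K₁ = Module.finrank ℝ K₂)
    (hcond : K₁ ⊓ orthB B K₂ ≤ K₂) :
    (∃ s₀ : Red B K₁ →ₗ[ℝ] ↥(orthB B K₁),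
        qmap B K₁ ∘ₗ s₀ = LinearMap.id ∧ ∀ x, ((s₀ x : ↥(orthB B K₁)) : E) ∈ orthB B K₂) ∧
    (∀ s₀ s₀' : Red B K₁ →ₗ[ℝ] ↥(orthB B K₁),
        qmap B K₁ ∘ₗ s₀ = LinearMap.id →
        (∀ x, ((s₀ x : ↥(orthB B K₁)) : E) ∈ orthB B K₂) →
        qmap B K₁ ∘ₗ s₀' = LinearMap.id →
        (∀ x, ((s₀' x : ↥(orthB B K₁)) : E) ∈ orthB B K₂) →
        ∀ x, ((s₀ x - s₀' x : ↥(orthB B K₁)) : E) ∈ K₁ ⊓ K₂) := by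
  have hRefl : B.IsRefl := fun x y h => by rw [hBsymm]; exact h
  have horth2 : ∀ W : Submodule ℝ E, orthB B (orthB B W) = W :=
    fun W => LinearMap.BilinForm.orthogonal_orthogonal hBnd hRefl W
  have hfin : ∀ W : Submodule ℝ E,
      Module.finrank ℝ W + Module.finrank ℝ (orthB B W) = Module.finrank ℝ E := by
    intro W
    have h := LinearMap.BilinForm.finrank_add_finrank_orthogonal (B := B) hRefl W
    rwa [LinearMap.BilinForm.orthogonal_top_eq_bot hBnd, inf_bot_eq, finrank_bot, add_zero] at h
  have hKK : K₁ ⊓ orthB B K₂ = K₁ ⊓ K₂ :=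
    le_antisymm (fun x hx => ⟨hx.1, hcond hx⟩) (fun x hx => ⟨hx.1, hK₂ hx.2⟩)
  have horthKK : orthB B (orthB B K₂ ⊔ K₁) = K₂ ⊓ orthB B K₁ := by
    rw [orth_sup, horth2]
  have h21 : K₁ ⊓ K₂ = K₂ ⊓ orthB B K₁ := by
    apply Submodule.eq_of_le_of_finrank_le (fun x hx => by
      have h := Submodule.mem_inf.mp hx
      exact Submodule.mem_inf.mpr ⟨h.2, hK₁ h.1⟩)
    have e1 := hfin (orthB B K₂ ⊔ K₁)
    have e2 := Submodule.finrank_sup_add_finrank_inf_eq (orthB B K₂) K₁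
    have e3 := hfin K₂
    have e4 : orthB B K₂ ⊓ K₁ = K₁ ⊓ K₂ := by rw [inf_comm]; exact hKK
    rw [horthKK] at e1
    rw [e4] at e2
    omega
  have h5 : orthB B (K₁ ⊔ orthB B (K₁ ⊔ K₂)) = K₁ := by
    rw [orth_sup B K₁ (orthB B (K₁ ⊔ K₂)), horth2]
    apply le_antisymm
    · rintro x ⟨hx1, hx2⟩
      obtain ⟨a, ha, b, hb, rfl⟩ := Submodule.mem_sup.mp hx2
      have hbO : b ∈ orthB B K₁ := by
        have h := sub_mem hx1 (hK₁ ha)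
        simpa using h
      have hbK : b ∈ K₁ ⊓ K₂ := h21 ▸ (⟨hb, hbO⟩ : b ∈ K₂ ⊓ orthB B K₁)
      exact add_mem ha hbK.1
    · exact le_inf hK₁ le_sup_left
  have hmain : K₁ ⊔ (orthB B K₁ ⊓ orthB B K₂) = orthB B K₁ := by
    have h := congrArg (orthB B) h5
    rwa [horth2, orth_sup] at h
  set P : Submodule ℝ ↥(orthB B K₁) := Ksub B K₁ with hP
  set Q : Submodule ℝ ↥(orthB B K₁) :=
    Submodule.comap (orthB B K₁).subtype (orthB B K₂) with hQdef
  have hPQ : P ⊔ Q = ⊤ := by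
    rw [eq_top_iff]
    rintro ⟨x, hx⟩ -
    have hx' : x ∈ K₁ ⊔ (orthB B K₁ ⊓ orthB B K₂) := by rw [hmain]; exact hx
    obtain ⟨a, ha, b, hb, hab⟩ := Submodule.mem_sup.mp hx'
    exact Submodule.mem_sup.mpr
      ⟨⟨a, hK₁ ha⟩, ha, ⟨b, hb.1⟩, hb.2, Subtype.ext hab⟩
  obtain ⟨W', hW'⟩ := Submodule.exists_isCompl (Submodule.comap Q.subtype P)
  set W : Submodule ℝ ↥(orthB B K₁) := Submodule.map Q.subtype W' with hWdef
  have hWQ : W ≤ Q := Submodule.map_subtype_le Q W'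
  have hdisj : Disjoint P W := by
    rw [disjoint_iff, eq_bot_iff]
    rintro x ⟨hxP, hxW⟩
    obtain ⟨y, hyW', rfl⟩ := Submodule.mem_map.mp hxW
    have hy0 : y = 0 := by
      have h := hW'.disjoint.le_bot (Submodule.mem_inf.mpr ⟨hxP, hyW'⟩)
      simpa using h
    simp [hy0]
  have hQeq : (Q ⊓ P) ⊔ W = Q := by
    have h := congrArg (Submodule.map Q.subtype) hW'.sup_eq_top
    rwa [Submodule.map_sup, Submodule.map_comap_subtype, Submodule.map_subtype_top] at h
  have hsupW : P ⊔ W = ⊤ := by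
    rw [← hPQ, ← hQeq, ← sup_assoc, sup_eq_left.mpr (inf_le_right : Q ⊓ P ≤ P)]
  have hcompl : IsCompl P W := ⟨hdisj, codisjoint_iff.mpr hsupW⟩
  constructor
  · refine ⟨W.subtype ∘ₗ (Submodule.quotientEquivOfIsCompl P W hcompl).toLinearMap, ?_, ?_⟩
    · ext x
      simp only [LinearMap.comp_apply, LinearMap.id_apply, qmap, Submodule.mkQ_apply,
        LinearEquiv.coe_coe, Submodule.coe_subtype]
      exact Submodule.mk_quotientEquivOfIsCompl_apply (h := hcompl) (x := Submodule.Quotient.mk x)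
    · intro x
      exact hWQ (Subtype.coe_prop _)
  · intro s₀ s₀' hq hr hq' hr' x
    have h1 : qmap B K₁ (s₀ x - s₀' x) = 0 := by
      have e1 := LinearMap.congr_fun hq x
      have e2 := LinearMap.congr_fun hq' x
      simp only [LinearMap.comp_apply, LinearMap.id_apply] at e1 e2
      rw [map_sub, e1, e2, sub_self]
    have hKm : (s₀ x - s₀' x) ∈ Ksub B K₁ := by
      rwa [qmap, Submodule.mkQ_apply, Submodule.Quotient.mk_eq_zero] at h1
    have hK1 : ((s₀ x - s₀' x : ↥(orthB B K₁)) : E) ∈ K₁ := hKm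
    have hO : ((s₀ x - s₀' x : ↥(orthB B K₁)) : E) ∈ orthB B K₂ := by
      rw [Submodule.coe_sub]
      exact sub_mem (hr x) (hr' x)
    exact ⟨hK1, hcond ⟨hK1, hO⟩⟩
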